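/- Under the same setup (i.i.d. prices, thresholds z_L ≤ z_H with p = P(X ≤ z_L) = P(X ≥ z_H), v_L = E[X | X ≤ z_L], v_H = E[X | X ≥ z_H]), the Buy-Below-Sell-Above algorithm — which sells when holding the stock and Xᵢ ≥ z_H, and buys when not holding and Xᵢ ≤ z_L, starting with one unit of stock — has expected profit at least (pT/2)·(v_H(1-επ) - v_L(1+επ) - 2εσ). -/

import Mathlib

open MeasureTheory ProbabilityTheory Finset

/-- Holding state of the Buy-Below-Sell-Above algorithm: `holdBBSA zL zH x i` is
`true` iff the algorithm holds the stock after observing the price `x i`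
(the algorithm starts holding one unit; it sells when holding and `x i ≥ zH`,
and buys when not holding and `x i ≤ zL`). -/
noncomputable def holdBBSA (zL zH : ℝ) (x : ℕ → ℝ) : ℕ → Bool
  | 0 => true
  | i + 1 =>
      if holdBBSA zL zH x i then decide (x (i + 1) < zH) else decide (x (i + 1) ≤ zL)

lemma holdBBSA_congr {zL zH : ℝ} {x y : ℕ → ℝ} {i : ℕ}
    (h : ∀ j, 1 ≤ j → j ≤ i → x j = y j) :
    holdBBSA zL zH x i = holdBBSA zL zH y i := by
  induction i with
  | zero => rfl
  | succ k ih =>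
    have hk : holdBBSA zL zH x k = holdBBSA zL zH y k :=
      ih fun j h1 h2 => h j h1 (h2.trans k.le_succ)
    have hx : x (k+1) = y (k+1) := h (k+1) (Nat.succ_le_succ k.zero_le) le_rfl
    simp only [holdBBSA, hk, hx]

lemma measurable_holdBBSA_comp {α : Type*} [MeasurableSpace α] (zL zH : ℝ)
    (u : ℕ → α → ℝ) (hu : ∀ j, Measurable (u j)) (i : ℕ) :
    Measurable (fun a => holdBBSA zL zH (fun j => u j a) i) := by
  induction i with
  | zero => exact measurable_const
  | succ k ih =>
    have h1 : Measurable (fun a => decide (u (k+1) a < zH)) := by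
      apply measurable_to_countable'
      intro b
      cases b
      · have : (fun a => decide (u (k+1) a < zH)) ⁻¹' {false} = {a | zH ≤ u (k+1) a} := by
          ext a; simp [not_lt]
        rw [this]; exact measurableSet_le measurable_const (hu (k+1))
      · have : (fun a => decide (u (k+1) a < zH)) ⁻¹' {true} = {a | u (k+1) a < zH} := by
          ext a; simp
        rw [this]; exact measurableSet_lt (hu (k+1)) measurable_const
    have h2 : Measurable (fun a => decide (u (k+1) a ≤ zL)) := by
      apply measurable_to_countable'
      intro b
      cases b
      · have : (fun a => decide (u (k+1) a ≤ zL)) ⁻¹' {false} = {a | zL < u (k+1) a} := by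
          ext a; simp [not_le]
        rw [this]; exact measurableSet_lt measurable_const (hu (k+1))
      · have : (fun a => decide (u (k+1) a ≤ zL)) ⁻¹' {true} = {a | u (k+1) a ≤ zL} := by
          ext a; simp
        rw [this]; exact measurableSet_le (hu (k+1)) measurable_const
    have hcond : MeasurableSet {a | holdBBSA zL zH (fun j => u j a) k = true} :=
      ih (MeasurableSet.singleton true)
    exact Measurable.ite hcond h1 h2

lemma holdBBSA_sum_count (zL zH : ℝ) (x : ℕ → ℝ) (k : ℕ) :
    ∑ i ∈ Icc 1 k,
      ((if holdBBSA zL zH x (i-1) = true then (1:ℝ) else 0) * (if zH ≤ x i then 1 else 0)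
        - (if holdBBSA zL zH x (i-1) = false then (1:ℝ) else 0) * (if x i ≤ zL then 1 else 0))
      = 1 - (if holdBBSA zL zH x k = true then 1 else 0) := by
  induction k with
  | zero => simp [holdBBSA]
  | succ n ih =>
    rw [Finset.sum_Icc_succ_top (Nat.one_le_iff_ne_zero.mpr (Nat.succ_ne_zero n)), ih]
    simp only [Nat.add_sub_cancel]
    rcases hn : holdBBSA zL zH x n with _ | _
    · by_cases h : x (n+1) ≤ zL
      · simp [holdBBSA, hn, h]
      · simp [holdBBSA, hn, h]
    · by_cases h : zH ≤ x (n+1)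
      · simp [holdBBSA, hn, h, not_lt.mpr h]
      · simp [holdBBSA, hn, h, lt_of_not_ge h]

theorem alg_lower_bound_transaction_costs {Ω : Type*} [MeasureSpace Ω]
    [IsProbabilityMeasure (ℙ : Measure Ω)]
    (T : ℕ) (X : ℕ → Ω → ℝ)
    (hmeas : ∀ i, Measurable (X i))
    (hint : ∀ i, Integrable (X i))
    (hnonneg : ∀ i ω, 0 ≤ X i ω)
    (hindep : iIndepFun X ℙ)
    (hident : ∀ i ∈ Icc 1 T, Measure.map (X i) ℙ = Measure.map (X 1) ℙ)
    (επ εσ : ℝ) (hπ0 : 0 ≤ επ) (hπ1 : επ < 1) (hσ0 : 0 ≤ εσ) (hσ1 : εσ < 1)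
    (zL zH p vL vH : ℝ) (hz : zL ≤ zH)
    (hpL : p = (ℙ {ω | X 1 ω ≤ zL}).toReal)
    (hpH : p = (ℙ {ω | zH ≤ X 1 ω}).toReal)
    (hvLdef : p * vL = ∫ ω in {ω | X 1 ω ≤ zL}, X 1 ω)
    (hvHdef : p * vH = ∫ ω in {ω | zH ≤ X 1 ω}, X 1 ω) :
    p * T / 2 * (vH * (1 - επ) - vL * (1 + επ) - 2 * εσ) ≤
      ∫ ω, ∑ i ∈ Icc 1 T,
        (({ω' : Ω | holdBBSA zL zH (fun j => X j ω') (i - 1) = true ∧ zH ≤ X i ω'}.indicator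
            (fun ω' => (1 - επ) * X i ω' - εσ) ω) -
          {ω' : Ω | holdBBSA zL zH (fun j => X j ω') (i - 1) = false ∧ X i ω' ≤ zL}.indicator
            (fun ω' => (1 + επ) * X i ω' + εσ) ω) := by
  -- measurability of the holding state
  have hHm : ∀ i, Measurable (fun ω => holdBBSA zL zH (fun j => X j ω) i) :=
    fun i => measurable_holdBBSA_comp zL zH X hmeas i
  have hA : ∀ i (c : Bool), MeasurableSet {ω | holdBBSA zL zH (fun j => X j ω) i = c} :=
    fun i c => hHm i (MeasurableSet.singleton c)
  -- independence of the holding state from the next price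
  have hInd : ∀ i : ℕ, IndepFun (fun ω => holdBBSA zL zH (fun j => X j ω) i) (X (i+1)) ℙ := by
    intro i
    have hd : Disjoint (Icc 1 i) ({i+1} : Finset ℕ) := by
      simp only [Finset.disjoint_singleton_right, Finset.mem_Icc]
      omega
    have base := hindep.indepFun_finset (Icc 1 i) {i+1} hd hmeas
    have hφ : Measurable (fun y : ((Icc 1 i : Finset ℕ) → ℝ) =>
        holdBBSA zL zH (fun j => if h : j ∈ Icc 1 i then y ⟨j, h⟩ else 0) i) := by
      apply measurable_holdBBSA_comp
      intro j
      by_cases h : j ∈ Icc 1 i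
      · simpa only [h, dif_pos] using measurable_pi_apply (⟨j, h⟩ : (Icc 1 i : Finset ℕ))
      · simp only [h, dif_neg, not_false_iff]; exact measurable_const
    have hψ : Measurable (fun y : (({i+1} : Finset ℕ) → ℝ) =>
        y ⟨i+1, Finset.mem_singleton_self _⟩) := measurable_pi_apply _
    have hcomp := base.comp hφ hψ
    have h1 : ((fun y : ((Icc 1 i : Finset ℕ) → ℝ) =>
        holdBBSA zL zH (fun j => if h : j ∈ Icc 1 i then y ⟨j, h⟩ else 0) i) ∘
          (fun ω (j : (Icc 1 i : Finset ℕ)) => X j ω))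
        = (fun ω => holdBBSA zL zH (fun j => X j ω) i) := by
      funext ω
      exact holdBBSA_congr fun j hj1 hj2 => by
        simp [Finset.mem_Icc.mpr ⟨hj1, hj2⟩]
    rw [h1] at hcomp
    exact hcomp
  -- the key independence computation
  have key : ∀ (i : ℕ) (g : ℝ → ℝ), Measurable g → ∀ c : Bool,
      (∫ ω, (if holdBBSA zL zH (fun j => X j ω) i = c then (1:ℝ) else 0) * g (X (i+1) ω))
        = (ℙ {ω | holdBBSA zL zH (fun j => X j ω) i = c}).toReal * ∫ ω, g (X (i+1) ω) := by
    intro i g hg c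
    have hφ : Measurable (fun b : Bool => if b = c then (1:ℝ) else 0) := measurable_of_countable _
    have hIF : IndepFun (fun ω => if holdBBSA zL zH (fun j => X j ω) i = c then (1:ℝ) else 0)
        (fun ω => g (X (i+1) ω)) ℙ := (hInd i).comp hφ hg
    have hmul := hIF.integral_fun_mul_eq_mul_integral ((hφ.comp (hHm i)).aestronglyMeasurable)
      ((hg.comp (hmeas (i+1))).aestronglyMeasurable)
    rw [hmul]
    congr 1
    have : (fun ω => if holdBBSA zL zH (fun j => X j ω) i = c then (1:ℝ) else 0)
        = Set.indicator {ω | holdBBSA zL zH (fun j => X j ω) i = c} (fun _ => (1:ℝ)) := by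
      funext ω
      by_cases h : holdBBSA zL zH (fun j => X j ω) i = c <;> simp [Set.indicator_apply, h]
    rw [this, integral_indicator_const _ (hA i c), smul_eq_mul, mul_one, measureReal_def]
  -- transfer of expectations through identical distribution
  have trans : ∀ i ∈ Icc 1 T, ∀ g : ℝ → ℝ, Measurable g →
      (∫ ω, g (X i ω)) = ∫ ω, g (X 1 ω) := by
    intro i hi g hg
    rw [← integral_map (hmeas i).aemeasurable hg.aestronglyMeasurable, hident i hi,
      integral_map (hmeas 1).aemeasurable hg.aestronglyMeasurable]

  -- the four basic payoff functions of the price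
  set gS : ℝ → ℝ := fun x => if zH ≤ x then (1-επ) * x - εσ else 0 with hgS
  set gB : ℝ → ℝ := fun x => if x ≤ zL then (1+επ) * x + εσ else 0 with hgB
  set g2 : ℝ → ℝ := fun x => if zH ≤ x then (1:ℝ) else 0 with hg2
  set g4 : ℝ → ℝ := fun x => if x ≤ zL then (1:ℝ) else 0 with hg4
  have hmgS : Measurable gS :=
    Measurable.ite (measurableSet_le measurable_const measurable_id)
      ((measurable_const.mul measurable_id).sub measurable_const) measurable_const
  have hmgB : Measurable gB :=
    Measurable.ite (measurableSet_le measurable_id measurable_const)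
      ((measurable_const.mul measurable_id).add measurable_const) measurable_const
  have hmg2 : Measurable g2 :=
    Measurable.ite (measurableSet_le measurable_const measurable_id)
      measurable_const measurable_const
  have hmg4 : Measurable g4 :=
    Measurable.ite (measurableSet_le measurable_id measurable_const)
      measurable_const measurable_const
  have hsetH : ∀ i, MeasurableSet {ω | zH ≤ X i ω} :=
    fun i => measurableSet_le measurable_const (hmeas i)
  have hsetL : ∀ i, MeasurableSet {ω | X i ω ≤ zL} :=
    fun i => measurableSet_le (hmeas i) measurable_const
  have hintgS : ∀ i, Integrable (fun ω => gS (X i ω)) := by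
    intro i
    have he : (fun ω => gS (X i ω))
        = Set.indicator {ω | zH ≤ X i ω} (fun ω => (1-επ) * X i ω - εσ) := by
      funext ω; by_cases h : zH ≤ X i ω <;> simp [hgS, Set.indicator_apply, h]
    rw [he]
    exact (((hint i).const_mul _).sub (integrable_const _)).indicator (hsetH i)
  have hintgB : ∀ i, Integrable (fun ω => gB (X i ω)) := by
    intro i
    have he : (fun ω => gB (X i ω))
        = Set.indicator {ω | X i ω ≤ zL} (fun ω => (1+επ) * X i ω + εσ) := by
      funext ω; by_cases h : X i ω ≤ zL <;> simp [hgB, Set.indicator_apply, h]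
    rw [he]
    exact (((hint i).const_mul _).add (integrable_const _)).indicator (hsetL i)
  have hintg2 : ∀ i, Integrable (fun ω => g2 (X i ω)) := by
    intro i
    have he : (fun ω => g2 (X i ω))
        = Set.indicator {ω | zH ≤ X i ω} (fun _ => (1:ℝ)) := by
      funext ω; by_cases h : zH ≤ X i ω <;> simp [hg2, Set.indicator_apply, h]
    rw [he]
    exact (integrable_const _).indicator (hsetH i)
  have hintg4 : ∀ i, Integrable (fun ω => g4 (X i ω)) := by
    intro i
    have he : (fun ω => g4 (X i ω))
        = Set.indicator {ω | X i ω ≤ zL} (fun _ => (1:ℝ)) := by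
      funext ω; by_cases h : X i ω ≤ zL <;> simp [hg4, Set.indicator_apply, h]
    rw [he]
    exact (integrable_const _).indicator (hsetL i)
  -- expectations of the basic functions at time 1
  have hEgS : (∫ ω, gS (X 1 ω)) = (1-επ) * (p * vH) - εσ * p := by
    have he : (fun ω => gS (X 1 ω))
        = Set.indicator {ω | zH ≤ X 1 ω} (fun ω => (1-επ) * X 1 ω - εσ) := by
      funext ω; by_cases h : zH ≤ X 1 ω <;> simp [hgS, Set.indicator_apply, h]
    rw [he, integral_indicator (hsetH 1),
      integral_sub (((hint 1).const_mul _).integrableOn) (integrable_const _).integrableOn,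
      integral_const_mul, ← hvHdef, setIntegral_const, smul_eq_mul, measureReal_def, ← hpH]
    ring
  have hEgB : (∫ ω, gB (X 1 ω)) = (1+επ) * (p * vL) + εσ * p := by
    have he : (fun ω => gB (X 1 ω))
        = Set.indicator {ω | X 1 ω ≤ zL} (fun ω => (1+επ) * X 1 ω + εσ) := by
      funext ω; by_cases h : X 1 ω ≤ zL <;> simp [hgB, Set.indicator_apply, h]
    rw [he, integral_indicator (hsetL 1),
      integral_add (((hint 1).const_mul _).integrableOn) (integrable_const _).integrableOn,
      integral_const_mul, ← hvLdef, setIntegral_const, smul_eq_mul, measureReal_def, ← hpL]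
    ring
  have hEg2 : (∫ ω, g2 (X 1 ω)) = p := by
    have he : (fun ω => g2 (X 1 ω))
        = Set.indicator {ω | zH ≤ X 1 ω} (fun _ => (1:ℝ)) := by
      funext ω; by_cases h : zH ≤ X 1 ω <;> simp [hg2, Set.indicator_apply, h]
    rw [he, integral_indicator_const _ (hsetH 1), smul_eq_mul, mul_one, measureReal_def, ← hpH]
  have hEg4 : (∫ ω, g4 (X 1 ω)) = p := by
    have he : (fun ω => g4 (X 1 ω))
        = Set.indicator {ω | X 1 ω ≤ zL} (fun _ => (1:ℝ)) := by
      funext ω; by_cases h : X 1 ω ≤ zL <;> simp [hg4, Set.indicator_apply, h]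
    rw [he, integral_indicator_const _ (hsetL 1), smul_eq_mul, mul_one, measureReal_def, ← hpL]
  -- abbreviation for holding probabilities
  set q : ℕ → ℝ := fun k => (ℙ {ω | holdBBSA zL zH (fun j => X j ω) k = true}).toReal with hq
  have hq01 : ∀ k, 0 ≤ q k ∧ q k ≤ 1 := by
    intro k
    constructor
    · exact ENNReal.toReal_nonneg
    · rw [hq]
      have h1 : ℙ {ω | holdBBSA zL zH (fun j => X j ω) k = true} ≤ 1 := prob_le_one
      simpa using ENNReal.toReal_mono ENNReal.one_ne_top h1
  have hq' : ∀ k, (ℙ {ω | holdBBSA zL zH (fun j => X j ω) k = false}).toReal = 1 - q k := by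
    intro k
    have hcompl : {ω | holdBBSA zL zH (fun j => X j ω) k = false}
        = {ω | holdBBSA zL zH (fun j => X j ω) k = true}ᶜ := by
      ext ω; simp
    have hsum := measure_add_measure_compl (μ := (ℙ : Measure Ω)) (hA k true)
    rw [measure_univ] at hsum
    have h2 := congrArg ENNReal.toReal hsum
    rw [ENNReal.toReal_add (measure_ne_top _ _) (measure_ne_top _ _), ENNReal.toReal_one] at h2
    rw [hcompl, hq]
    linarith
  -- integrability of products with the holding indicator
  have hprod_int : ∀ (k : ℕ) (g : ℝ → ℝ) (c : Bool), Integrable (fun ω => g (X (k+1) ω)) →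
      Integrable (fun ω =>
        (if holdBBSA zL zH (fun j => X j ω) k = c then (1:ℝ) else 0) * g (X (k+1) ω)) := by
    intro k g c hgi
    have he : (fun ω => (if holdBBSA zL zH (fun j => X j ω) k = c then (1:ℝ) else 0)
          * g (X (k+1) ω))
        = Set.indicator {ω | holdBBSA zL zH (fun j => X j ω) k = c}
            (fun ω => g (X (k+1) ω)) := by
      funext ω
      by_cases h : holdBBSA zL zH (fun j => X j ω) k = c <;> simp [Set.indicator_apply, h]
    rw [he]
    exact hgi.indicator (hA k c)
  -- pointwise rewriting of the indicators in the statement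
  have eS : ∀ (k : ℕ) (ω : Ω),
      ({ω' : Ω | holdBBSA zL zH (fun j => X j ω') k = true ∧ zH ≤ X (k+1) ω'}.indicator
        (fun ω' => (1 - επ) * X (k+1) ω' - εσ) ω)
      = (if holdBBSA zL zH (fun j => X j ω) k = true then (1:ℝ) else 0) * gS (X (k+1) ω) := by
    intro k ω
    by_cases h1 : holdBBSA zL zH (fun j => X j ω) k = true <;>
      by_cases h2 : zH ≤ X (k+1) ω <;>
      simp [Set.indicator_apply, h1, h2, hgS]
  have eB : ∀ (k : ℕ) (ω : Ω),
      ({ω' : Ω | holdBBSA zL zH (fun j => X j ω') k = false ∧ X (k+1) ω' ≤ zL}.indicator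
        (fun ω' => (1 + επ) * X (k+1) ω' + εσ) ω)
      = (if holdBBSA zL zH (fun j => X j ω) k = false then (1:ℝ) else 0) * gB (X (k+1) ω) := by
    intro k ω
    by_cases h1 : holdBBSA zL zH (fun j => X j ω) k = false <;>
      by_cases h2 : X (k+1) ω ≤ zL <;>
      simp [Set.indicator_apply, h1, h2, hgB]
  -- integrability of each summand in the statement
  have hterm_int : ∀ i ∈ Icc 1 T, Integrable (fun ω =>
      ({ω' : Ω | holdBBSA zL zH (fun j => X j ω') (i - 1) = true ∧ zH ≤ X i ω'}.indicator
          (fun ω' => (1 - επ) * X i ω' - εσ) ω) -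
        {ω' : Ω | holdBBSA zL zH (fun j => X j ω') (i - 1) = false ∧ X i ω' ≤ zL}.indicator
          (fun ω' => (1 + επ) * X i ω' + εσ) ω) := by
    intro i hi
    obtain ⟨k, rfl⟩ : ∃ k, i = k + 1 := ⟨i - 1, by have h := Finset.mem_Icc.mp hi; omega⟩
    simp only [Nat.add_sub_cancel]
    have h1 := hprod_int k gS true (hintgS (k+1))
    have h2 := hprod_int k gB false (hintgB (k+1))
    refine ((h1.sub h2).congr ?_)
    filter_upwards with ω
    simp only [Pi.sub_apply]
    rw [eS k ω, eB k ω]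
  -- expectation of each summand
  have hterm : ∀ k : ℕ, (k + 1) ∈ Icc 1 T →
      (∫ ω,
        (({ω' : Ω | holdBBSA zL zH (fun j => X j ω') k = true ∧ zH ≤ X (k+1) ω'}.indicator
            (fun ω' => (1 - επ) * X (k+1) ω' - εσ) ω) -
          {ω' : Ω | holdBBSA zL zH (fun j => X j ω') k = false ∧ X (k+1) ω' ≤ zL}.indicator
            (fun ω' => (1 + επ) * X (k+1) ω' + εσ) ω))
      = q k * ((1-επ) * (p * vH) - εσ * p) - (1 - q k) * ((1+επ) * (p * vL) + εσ * p) := by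
    intro k hk
    have hrw : (fun ω =>
        (({ω' : Ω | holdBBSA zL zH (fun j => X j ω') k = true ∧ zH ≤ X (k+1) ω'}.indicator
            (fun ω' => (1 - επ) * X (k+1) ω' - εσ) ω) -
          {ω' : Ω | holdBBSA zL zH (fun j => X j ω') k = false ∧ X (k+1) ω' ≤ zL}.indicator
            (fun ω' => (1 + επ) * X (k+1) ω' + εσ) ω))
        = fun ω =>
          (if holdBBSA zL zH (fun j => X j ω) k = true then (1:ℝ) else 0) * gS (X (k+1) ω)
          - (if holdBBSA zL zH (fun j => X j ω) k = false then (1:ℝ) else 0) * gB (X (k+1) ω) := by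
      funext ω; rw [eS k ω, eB k ω]
    rw [hrw, integral_sub (hprod_int k gS true (hintgS (k+1))) (hprod_int k gB false (hintgB (k+1))),
      key k gS hmgS true, key k gB hmgB false,
      trans (k+1) hk gS hmgS, trans (k+1) hk gB hmgB, hEgS, hEgB, hq' k]
  -- the counting inequality : expected sells minus buys is nonnegative
  have hcount : 0 ≤ ∑ i ∈ Icc 1 T, (q (i-1) * p - (1 - q (i-1)) * p) := by
    have hptws : ∀ ω : Ω, ∑ i ∈ Icc 1 T,
        ((if holdBBSA zL zH (fun j => X j ω) (i-1) = true then (1:ℝ) else 0) * g2 (X i ω)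
          - (if holdBBSA zL zH (fun j => X j ω) (i-1) = false then (1:ℝ) else 0) * g4 (X i ω))
        = 1 - (if holdBBSA zL zH (fun j => X j ω) T = true then 1 else 0) := by
      intro ω
      simpa only [hg2, hg4] using holdBBSA_sum_count zL zH (fun j => X j ω) T
    have hint_i : ∀ i ∈ Icc 1 T, Integrable (fun ω =>
        (if holdBBSA zL zH (fun j => X j ω) (i-1) = true then (1:ℝ) else 0) * g2 (X i ω)
          - (if holdBBSA zL zH (fun j => X j ω) (i-1) = false then (1:ℝ) else 0) * g4 (X i ω)) := by
      intro i hi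
      obtain ⟨k, rfl⟩ : ∃ k, i = k + 1 := ⟨i - 1, by have h := Finset.mem_Icc.mp hi; omega⟩
      simp only [Nat.add_sub_cancel]
      exact (hprod_int k g2 true (hintg2 (k+1))).sub (hprod_int k g4 false (hintg4 (k+1)))
    have hI1 : (∫ ω, ∑ i ∈ Icc 1 T,
        ((if holdBBSA zL zH (fun j => X j ω) (i-1) = true then (1:ℝ) else 0) * g2 (X i ω)
          - (if holdBBSA zL zH (fun j => X j ω) (i-1) = false then (1:ℝ) else 0) * g4 (X i ω)))
        = ∑ i ∈ Icc 1 T, (q (i-1) * p - (1 - q (i-1)) * p) := by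
      rw [integral_finset_sum _ hint_i]
      refine Finset.sum_congr rfl fun i hi => ?_
      obtain ⟨k, rfl⟩ : ∃ k, i = k + 1 := ⟨i - 1, by have h := Finset.mem_Icc.mp hi; omega⟩
      simp only [Nat.add_sub_cancel]
      rw [integral_sub (hprod_int k g2 true (hintg2 (k+1))) (hprod_int k g4 false (hintg4 (k+1))),
        key k g2 hmg2 true, key k g4 hmg4 false,
        trans (k+1) hi g2 hmg2, trans (k+1) hi g4 hmg4, hEg2, hEg4, hq' k]
    rw [← hI1]
    apply integral_nonneg
    intro ω
    dsimp only
    rw [hptws ω]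
    by_cases h : holdBBSA zL zH (fun j => X j ω) T = true <;> simp [h]
  -- put everything together
  have hsum : (∫ ω, ∑ i ∈ Icc 1 T,
        (({ω' : Ω | holdBBSA zL zH (fun j => X j ω') (i - 1) = true ∧ zH ≤ X i ω'}.indicator
            (fun ω' => (1 - επ) * X i ω' - εσ) ω) -
          {ω' : Ω | holdBBSA zL zH (fun j => X j ω') (i - 1) = false ∧ X i ω' ≤ zL}.indicator
            (fun ω' => (1 + επ) * X i ω' + εσ) ω))
      = ∑ i ∈ Icc 1 T, (q (i-1) * ((1-επ) * (p * vH) - εσ * p)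
          - (1 - q (i-1)) * ((1+επ) * (p * vL) + εσ * p)) := by
    rw [integral_finset_sum _ hterm_int]
    refine Finset.sum_congr rfl fun i hi => ?_
    obtain ⟨k, rfl⟩ : ∃ k, i = k + 1 := ⟨i - 1, by have h := Finset.mem_Icc.mp hi; omega⟩
    simp only [Nat.add_sub_cancel]
    exact hterm k hi
  rw [hsum]
  -- final algebra
  set Q : ℝ := ∑ i ∈ Icc 1 T, q (i-1) with hQ
  have hcard : ((Icc 1 T).card : ℝ) = (T : ℝ) := by
    rw [Nat.card_Icc]; simp
  have hsum1 : ∑ i ∈ Icc 1 T, (q (i-1) * ((1-επ) * (p * vH) - εσ * p)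
      - (1 - q (i-1)) * ((1+επ) * (p * vL) + εσ * p))
      = Q * ((1-επ) * (p * vH) - εσ * p) - ((T : ℝ) - Q) * ((1+επ) * (p * vL) + εσ * p) := by
    rw [Finset.sum_sub_distrib, ← Finset.sum_mul, ← Finset.sum_mul, ← hQ]
    congr 2
    rw [Finset.sum_sub_distrib, Finset.sum_const, ← hQ, nsmul_eq_mul, mul_one, hcard]
  have hcount2 : 0 ≤ p * (2 * Q - (T : ℝ)) := by
    have : ∑ i ∈ Icc 1 T, (q (i-1) * p - (1 - q (i-1)) * p)
        = p * (2 * Q - (T : ℝ)) := by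
      rw [Finset.sum_sub_distrib, ← Finset.sum_mul, ← Finset.sum_mul, ← hQ,
        Finset.sum_sub_distrib, Finset.sum_const, ← hQ, nsmul_eq_mul, mul_one, hcard]
      ring
    rw [← this]; exact hcount
  rw [hsum1]
  have hp0 : 0 ≤ p := hpH ▸ ENNReal.toReal_nonneg
  rcases eq_or_lt_of_le hp0 with hp | hp
  · rw [← hp]; ring_nf
    exact le_refl 0
  · have hpvH : 0 ≤ p * vH := by
      rw [hvHdef]
      exact setIntegral_nonneg (hsetH 1) fun ω _ => hnonneg 1 ω
    have hpvL : 0 ≤ p * vL := by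
      rw [hvLdef]
      exact setIntegral_nonneg (hsetL 1) fun ω _ => hnonneg 1 ω
    have hvH0 : 0 ≤ vH := (mul_nonneg_iff_of_pos_left hp).mp hpvH
    have hvL0 : 0 ≤ vL := (mul_nonneg_iff_of_pos_left hp).mp hpvL
    have h2QT : 0 ≤ 2 * Q - (T : ℝ) := (mul_nonneg_iff_of_pos_left hp).mp hcount2
    nlinarith [mul_nonneg h2QT (mul_nonneg hp0
      (add_nonneg (mul_nonneg (by linarith : (0:ℝ) ≤ 1 - επ) hvH0)
        (mul_nonneg (by linarith : (0:ℝ) ≤ 1 + επ) hvL0)))]
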